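/- Let 0 < y ≤ z ≤ x be real numbers and let B be a finite nonempty subset of (y, z]. Then there exists a positive integer k such that the number of k-tuples (b₁,…,b_k) ∈ B^k with b₁+⋯+b_k ∈ (x−z, x] is at least |B|^k · (y/x). -/

import Mathlib

open Finset

private def pg (N : ℕ) (t : Fin N → ℝ) (i : ℕ) : ℝ :=
  if h : i < N then t ⟨i, h⟩ else 0

private def pS (N : ℕ) (t : Fin N → ℝ) (k : ℕ) : ℝ :=
  ∑ i ∈ Finset.range k, pg N t i

private lemma pS_succ (N : ℕ) (t : Fin N → ℝ) (k : ℕ) :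
    pS N t (k + 1) = pS N t k + pg N t k :=
  Finset.sum_range_succ _ _

private lemma pS_lower {y : ℝ} {N : ℕ} {t : Fin N → ℝ}
    (ht : ∀ i : Fin N, y < t i) {k : ℕ} (hk1 : 1 ≤ k) (hkN : k ≤ N) :
    (k : ℝ) * y < pS N t k := by
  have h : ∑ _i ∈ Finset.range k, y < ∑ i ∈ Finset.range k, pg N t i := by
    apply Finset.sum_lt_sum_of_nonempty
    · exact Finset.nonempty_range_iff.mpr (by omega)
    · intro i hi
      rw [Finset.mem_range] at hi
      have hiN : i < N := lt_of_lt_of_le hi hkN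
      simpa [pg, hiN] using ht ⟨i, hiN⟩
  simpa [Finset.sum_const, nsmul_eq_mul, pS] using h

private lemma pS_sum_eq {N k : ℕ} (hkN : k ≤ N) (t : Fin N → ℝ) :
    (∑ i : Fin k, t (Fin.castLE hkN i)) = pS N t k := by
  rw [pS, ← Fin.sum_univ_eq_sum_range (fun i => pg N t i) k]
  apply Finset.sum_congr rfl
  intro i _
  have hiN : (i : ℕ) < N := lt_of_lt_of_le i.2 hkN
  simp [pg, hiN, Fin.castLE]

set_option maxHeartbeats 1000000 in
open Finset Classical in
theorem stmt_3 (x y z : ℝ) (hy : 0 < y) (hyz : y ≤ z) (hzx : z ≤ x)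
    (B : Finset ℝ) (hBne : B.Nonempty) (hB : ∀ b ∈ B, y < b ∧ b ≤ z) :
    ∃ k : ℕ, 0 < k ∧
      (((Fintype.piFinset fun _ : Fin k => B).filter
          (fun t => x - z < ∑ i, t i ∧ ∑ i, t i ≤ x)).card : ℝ) ≥
        (B.card : ℝ) ^ k * (y / x) := by
  classical
  obtain ⟨b₀, hb₀⟩ := hBne
  have hyz' : y < z := lt_of_lt_of_le (hB b₀ hb₀).1 (hB b₀ hb₀).2
  have hzpos : 0 < z := hy.trans hyz'
  have hx : 0 < x := hzpos.trans_le hzx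
  have hyx : y < x := hyz'.trans_le hzx
  set N : ℕ := ⌈x / y⌉₊ with hNdef
  have hN1 : 1 < N := by
    rw [hNdef, Nat.lt_ceil]
    push_cast
    rw [lt_div_iff₀ hy]; linarith
  have hNy : x ≤ (N : ℝ) * y := by
    have h := Nat.le_ceil (x / y)
    rw [div_le_iff₀ hy] at h
    exact h.trans_eq rfl
  set K : ℕ := N - 1 with hKdef
  have hK1 : 1 ≤ K := by omega
  have hKcast : (K : ℝ) = (N : ℝ) - 1 := by
    rw [hKdef, Nat.cast_sub (by omega)]; norm_num
  have hKx : (K : ℝ) * y < x := by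
    have h := Nat.ceil_lt_add_one (by positivity : (0:ℝ) ≤ x / y)
    rw [← hNdef] at h
    have h2 : (K : ℝ) < x / y := by rw [hKcast]; linarith
    calc (K : ℝ) * y < (x / y) * y := by nlinarith
    _ = x := by field_simp
  set m := B.card with hm
  have hm1 : 1 ≤ m := Finset.card_pos.mpr ⟨b₀, hb₀⟩
  set T := Fintype.piFinset (fun _ : Fin N => B) with hT
  -- basic facts about members of T
  have hty : ∀ t ∈ T, ∀ i : Fin N, y < t i := by
    intro t ht i
    rw [hT, Fintype.mem_piFinset] at ht
    exact (hB _ (ht i)).1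
  have htz : ∀ t ∈ T, ∀ i : Fin N, t i ≤ z := by
    intro t ht i
    rw [hT, Fintype.mem_piFinset] at ht
    exact (hB _ (ht i)).2
  have hex : ∀ t ∈ T, ∃ k, x - z < pS N t k := by
    intro t ht
    refine ⟨N, ?_⟩
    have h := pS_lower (hty t ht) (by omega : 1 ≤ N) le_rfl
    linarith
  set F : (Fin N → ℝ) → ℕ := fun t =>
    if h : ∃ k, x - z < pS N t k then Nat.find h else 0 with hF
  have hFspec : ∀ t ∈ T, x - z < pS N t (F t) := by
    intro t ht
    rw [hF]; simp only [hex t ht, dif_pos]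
    exact Nat.find_spec (hex t ht)
  have hFmin : ∀ t ∈ T, ∀ j < F t, ¬ (x - z < pS N t j) := by
    intro t ht j hj
    simp only [hF, hex t ht, dif_pos] at hj
    exact Nat.find_min (hex t ht) hj
  have hF1 : ∀ t ∈ T, 1 ≤ F t := by
    intro t ht
    by_contra h
    have h0 : F t = 0 := by omega
    have := hFspec t ht
    rw [h0] at this
    simp [pS] at this
    linarith
  have hFN : ∀ t ∈ T, F t ≤ N := by
    intro t ht
    rw [hF]; simp only [hex t ht, dif_pos]
    apply Nat.find_le
    have h := pS_lower (hty t ht) (by omega : 1 ≤ N) le_rfl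
    linarith
  have hFle : ∀ t ∈ T, pS N t (F t) ≤ x := by
    intro t ht
    obtain ⟨j, hj⟩ : ∃ j, F t = j + 1 := ⟨F t - 1, by have := hF1 t ht; omega⟩
    have hjN : j < N := by have := hFN t ht; omega
    have h1 : ¬ (x - z < pS N t j) := hFmin t ht j (by omega)
    push_neg at h1
    have h2 : pg N t j ≤ z := by
      simp only [pg, hjN, dif_pos]
      exact htz t ht _
    rw [hj, pS_succ]
    linarith
  have hFltN : ∀ t ∈ T, F t < N := by
    intro t ht
    by_contra h
    have heq : F t = N := by have := hFN t ht; omega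
    have h1 := pS_lower (hty t ht) (hF1 t ht) (hFN t ht)
    have h2 := hFle t ht
    rw [heq] at h1 h2
    linarith
  have hFK : ∀ t ∈ T, F t ∈ Finset.Icc 1 K := by
    intro t ht
    rw [Finset.mem_Icc]
    exact ⟨hF1 t ht, by have := hFltN t ht; omega⟩
  -- fiber decomposition
  have hcard : T.card = ∑ k ∈ Finset.Icc 1 K, (T.filter (fun t => F t = k)).card :=
    Finset.card_eq_sum_card_fiberwise hFK
  have hTcard : T.card = m ^ N := by
    rw [hT, Fintype.card_piFinset]
    simp [hm]
  -- the good sets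
  set Gc : ℕ → ℕ := fun k =>
    ((Fintype.piFinset fun _ : Fin k => B).filter
      (fun t => x - z < ∑ i, t i ∧ ∑ i, t i ≤ x)).card with hGc
  have hfiber : ∀ k ∈ Finset.Icc 1 K,
      (T.filter (fun t => F t = k)).card ≤ Gc k * m ^ (N - k) := by
    intro k hk
    rw [Finset.mem_Icc] at hk
    have hkN : k ≤ N := by omega
    have hmap : ∀ t ∈ T.filter (fun t => F t = k),
        ((fun i : Fin k => t (Fin.castLE hkN i)),
         (fun j : Fin (N - k) => t ⟨k + j.1, by have := j.2; omega⟩)) ∈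
        ((Fintype.piFinset fun _ : Fin k => B).filter
          (fun t => x - z < ∑ i, t i ∧ ∑ i, t i ≤ x)) ×ˢ
        (Fintype.piFinset fun _ : Fin (N - k) => B) := by
      intro t ht
      rw [Finset.mem_filter] at ht
      obtain ⟨htT, htF⟩ := ht
      have htB : ∀ i : Fin N, t i ∈ B := by
        rw [hT, Fintype.mem_piFinset] at htT; exact htT
      rw [Finset.mem_product]
      constructor
      · rw [Finset.mem_filter]
        refine ⟨by rw [Fintype.mem_piFinset]; intro i; exact htB _, ?_⟩
        have hs : (∑ i : Fin k, t (Fin.castLE hkN i)) = pS N t k := pS_sum_eq hkN t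
        constructor
        · rw [hs, ← htF]; exact hFspec t htT
        · rw [hs, ← htF]; exact hFle t htT
      · rw [Fintype.mem_piFinset]; intro j; exact htB _
    have hinj : Set.InjOn (fun t : Fin N → ℝ =>
        ((fun i : Fin k => t (Fin.castLE hkN i)),
         (fun j : Fin (N - k) => t ⟨k + j.1, by have := j.2; omega⟩)))
        (T.filter (fun t => F t = k)) := by
      intro t1 _ t2 _ heq
      have e1 := congrArg Prod.fst heq
      have e2 := congrArg Prod.snd heq
      simp only at e1 e2
      funext i
      by_cases hik : (i : ℕ) < k
      · have h := congrFun e1 ⟨i, hik⟩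
        have hcast : Fin.castLE hkN (⟨(i : ℕ), hik⟩ : Fin k) = i := by
          apply Fin.ext; rfl
        rwa [hcast] at h
      · have hj : (i : ℕ) - k < N - k := by have := i.2; omega
        have := congrFun e2 ⟨(i : ℕ) - k, hj⟩
        simp only at this
        have hidx : (⟨k + ((i : ℕ) - k), by have := i.2; omega⟩ : Fin N) = i := by
          apply Fin.ext
          show k + ((i : ℕ) - k) = (i : ℕ)
          omega
        rwa [hidx] at this
    calc (T.filter (fun t => F t = k)).card
        ≤ (((Fintype.piFinset fun _ : Fin k => B).filter
            (fun t => x - z < ∑ i, t i ∧ ∑ i, t i ≤ x)) ×ˢ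
           (Fintype.piFinset fun _ : Fin (N - k) => B)).card :=
          Finset.card_le_card_of_injOn _ hmap hinj
      _ = Gc k * m ^ (N - k) := by
          rw [Finset.card_product, hGc, Fintype.card_piFinset]
          simp [hm]
  have hsumge : (m : ℕ) ^ N ≤ ∑ k ∈ Finset.Icc 1 K, Gc k * m ^ (N - k) := by
    rw [← hTcard, hcard]
    exact Finset.sum_le_sum hfiber
  -- pigeonhole in ℝ
  have key : ∃ k ∈ Finset.Icc 1 K,
      ((m : ℝ)) ^ N ≤ (K : ℝ) * ((Gc k : ℝ) * (m : ℝ) ^ (N - k)) := by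
    by_contra hcon
    push_neg at hcon
    have hne : (Finset.Icc 1 K).Nonempty := ⟨1, by rw [Finset.mem_Icc]; omega⟩
    have hKpos : (0 : ℝ) < K := by exact_mod_cast hK1
    have hlt : ∑ k ∈ Finset.Icc 1 K, ((Gc k : ℝ) * (m : ℝ) ^ (N - k)) <
        ∑ _k ∈ Finset.Icc 1 K, ((m : ℝ) ^ N / K) := by
      apply Finset.sum_lt_sum_of_nonempty hne
      intro k hk
      have := hcon k hk
      rw [lt_div_iff₀ hKpos]
      linarith [hcon k hk]
    rw [Finset.sum_const, Nat.card_Icc, nsmul_eq_mul] at hlt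
    have hKc : ((K + 1 - 1 : ℕ) : ℝ) = (K : ℝ) := by norm_num
    rw [hKc] at hlt
    have hsum' : (m : ℝ) ^ N ≤ ∑ k ∈ Finset.Icc 1 K, ((Gc k : ℝ) * (m : ℝ) ^ (N - k)) := by
      have := hsumge
      push_cast
      exact_mod_cast this
    have : (K : ℝ) * ((m : ℝ) ^ N / K) = (m : ℝ) ^ N := by field_simp
    linarith
  obtain ⟨k, hk, hkey⟩ := key
  rw [Finset.mem_Icc] at hk
  refine ⟨k, by omega, ?_⟩
  have hkN : k ≤ N := by omega
  have hm0 : (0 : ℝ) < (m : ℝ) := by exact_mod_cast hm1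
  have hmpos : (0 : ℝ) < (m : ℝ) ^ (N - k) := pow_pos hm0 _
  have hmk : (0 : ℝ) < (m : ℝ) ^ k := pow_pos hm0 _
  have hpow : (m : ℝ) ^ N = (m : ℝ) ^ k * (m : ℝ) ^ (N - k) := by
    rw [← pow_add]; congr 1; omega
  have h1 : (m : ℝ) ^ k ≤ (K : ℝ) * (Gc k : ℝ) := by
    rw [hpow] at hkey
    have := mul_le_mul_of_nonneg_right (le_refl ((K:ℝ) * (Gc k : ℝ))) (le_of_lt hmpos)
    nlinarith
  have hG0 : (0 : ℝ) ≤ (Gc k : ℝ) := Nat.cast_nonneg _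
  rw [ge_iff_le]
  show (m : ℝ) ^ k * (y / x) ≤ (Gc k : ℝ)
  rw [← mul_div_assoc, div_le_iff₀ hx]
  nlinarith [mul_le_mul_of_nonneg_left (le_of_lt hKx) hG0]
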